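/- Let g be a compact simple Lie algebra, t a maximal abelian subalgebra, δ = Σ_j m_j α_j the highest root, and σ = Ad(exp(π/2)√−1K_i) with m_i = 3; set h := g^σ. Let τ be an involutive automorphism of g with τ(h) = h and τ(t) = t, and write τ(δ) = Σ_j c_j α_j. Then: (i) τ∘σ = σ∘τ if and only if c_i = 3; (ii) τ∘σ = σ^{−1}∘τ if and only if c_i = −3. -/

import Mathlib

/-!
Common framework: we model the complexification `gC` of a compact Lie algebra `g` as a
complex Lie algebra, the compact real form `g` and the maximal abelian subalgebra `t`
as real Lie subalgebras of `gC`, roots of `(gC, tC)` as complex-linear functionals on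
`gC` (only their restriction to `tC`, the complex span of `t`, matters), and the
inner automorphisms `Ad(exp X) = exp (ad X)` through an abstract family `expAd`
characterized by its action on eigenvectors of `ad X` (which determines it on the
compact form, where every `ad X` is semisimple).
-/

open Complex

namespace Paper

variable (gC : Type) [LieRing gC] [LieAlgebra ℂ gC] [LieAlgebra ℝ gC]
  [IsScalarTower ℝ ℂ gC] [FiniteDimensional ℂ gC]

/-- Composition group structure on the Lie algebra automorphisms of `gC`. -/
noncomputable instance : Group (gC ≃ₗ⁅ℂ⁆ gC) where
  mul f g := g.trans f
  one := LieEquiv.refl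
  inv f := f.symm
  mul_assoc f g h := rfl
  one_mul f := rfl
  mul_one f := rfl
  inv_mul_cancel f := by
    ext x
    exact f.symm_apply_apply x

/-- The complex span `t_ℂ` of a real subalgebra `t` of `gC`. -/
def cspan (t : LieSubalgebra ℝ gC) : Submodule ℂ gC := Submodule.span ℂ (t : Set gC)

/-- The root space of the functional `a` with respect to `t_ℂ`. -/
def rootSpace (t : LieSubalgebra ℝ gC) (a : Module.Dual ℂ gC) : Set gC :=
  {X : gC | ∀ H ∈ cspan gC t, ⁅H, X⁆ = a H • X}

/-- `a` is a root of `(gC, t_ℂ)`. -/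
def IsRoot (t : LieSubalgebra ℝ gC) (a : Module.Dual ℂ gC) : Prop :=
  (∃ H ∈ cspan gC t, a H ≠ 0) ∧ ∃ X : gC, X ≠ 0 ∧ X ∈ rootSpace gC t a

/-- `g` is a compact real form of `gC`: `gC = g ⊕ √-1 g` and the Killing form of `g`
is negative definite. -/
structure IsCompactForm (g : LieSubalgebra ℝ gC) : Prop where
  spans : ∀ z : gC, ∃ x ∈ g, ∃ y ∈ g, z = x + Complex.I • y
  inj : ∀ x : gC, x ∈ g → Complex.I • x ∈ g → x = 0
  negdef : ∀ x : ↥g, x ≠ 0 → killingForm ℝ ↥g x x < 0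

/-- `t` is a maximal abelian subalgebra of `g`. -/
structure IsMaxAbelian (g t : LieSubalgebra ℝ gC) : Prop where
  le : t ≤ g
  abelian : ∀ x ∈ t, ∀ y ∈ t, ⁅x, y⁆ = (0 : gC)
  max : ∀ t' : LieSubalgebra ℝ gC, t' ≤ g →
    (∀ x ∈ t', ∀ y ∈ t', ⁅x, y⁆ = (0 : gC)) → t ≤ t' → t' = t

/-- `α 1, …, α n` is a system of fundamental (simple) roots of `Δ(gC, t_ℂ)` and
`K 1, …, K n` is the dual basis of `t_ℂ`, i.e. `α i (K j) = δ_{ij}`. -/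
structure IsSimpleSystem (t : LieSubalgebra ℝ gC) (n : ℕ) (α : ℕ → Module.Dual ℂ gC)
    (K : ℕ → gC) : Prop where
  isRoot : ∀ i ∈ Finset.Icc 1 n, IsRoot gC t (α i)
  decomp : ∀ b : Module.Dual ℂ gC, IsRoot gC t b →
    (∃ k : ℕ → ℕ, ∀ H ∈ cspan gC t, b H = ∑ j ∈ Finset.Icc 1 n, (k j : ℂ) * α j H) ∨
    (∃ k : ℕ → ℕ, ∀ H ∈ cspan gC t, b H = -∑ j ∈ Finset.Icc 1 n, (k j : ℂ) * α j H)
  K_mem : ∀ j ∈ Finset.Icc 1 n, K j ∈ cspan gC t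
  K_dual : ∀ i ∈ Finset.Icc 1 n, ∀ j ∈ Finset.Icc 1 n, α i (K j) = if i = j then 1 else 0

/-- `δ = Σ m_j α_j` is the highest root of `Δ(gC, t_ℂ)`. -/
structure IsHighestRoot (t : LieSubalgebra ℝ gC) (n : ℕ) (α : ℕ → Module.Dual ℂ gC)
    (δ : Module.Dual ℂ gC) (m : ℕ → ℕ) : Prop where
  isRoot : IsRoot gC t δ
  decomp : ∀ H ∈ cspan gC t, δ H = ∑ j ∈ Finset.Icc 1 n, (m j : ℂ) * α j H
  highest : ∀ (b : Module.Dual ℂ gC) (k : ℕ → ℕ), IsRoot gC t b →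
    (∀ H ∈ cspan gC t, b H = ∑ j ∈ Finset.Icc 1 n, (k j : ℂ) * α j H) →
    ∀ j ∈ Finset.Icc 1 n, k j ≤ m j

/-- `expAd X` is the inner automorphism `Ad(exp X) = exp (ad X)` of `gC`:
it multiplies each eigenvector of `ad X` with eigenvalue `c` by `e^c`, it is additive on
commuting arguments, and conjugation by any automorphism transports it naturally. -/
structure IsExpAd (expAd : gC → (gC ≃ₗ⁅ℂ⁆ gC)) : Prop where
  eig : ∀ (X Y : gC) (c : ℂ), ⁅X, Y⁆ = c • Y → expAd X Y = Complex.exp c • Y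
  add : ∀ X Y : gC, ⁅X, Y⁆ = 0 → expAd (X + Y) = expAd X * expAd Y
  conj : ∀ (f : gC ≃ₗ⁅ℂ⁆ gC) (X : gC), f * expAd X * f⁻¹ = expAd (f X)

/-- The group `Int(s)` of inner automorphisms generated by `exp (ad X)`, `X ∈ s`. -/
noncomputable def Inn (expAd : gC → (gC ≃ₗ⁅ℂ⁆ gC)) (s : LieSubalgebra ℝ gC) :
    Subgroup (gC ≃ₗ⁅ℂ⁆ gC) :=
  Subgroup.closure (expAd '' (s : Set gC))

/-- The automorphism `τ_H = Ad(exp π √-1 H)`. -/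
noncomputable def tau (expAd : gC → (gC ≃ₗ⁅ℂ⁆ gC)) (H : gC) : gC ≃ₗ⁅ℂ⁆ gC :=
  expAd (((Real.pi : ℂ) * Complex.I) • H)

/-- The automorphism `Ad(exp (π/2) √-1 H)`. -/
noncomputable def sigmaAd (expAd : gC → (gC ≃ₗ⁅ℂ⁆ gC)) (H : gC) : gC ≃ₗ⁅ℂ⁆ gC :=
  expAd ((((Real.pi / 2 : ℝ) : ℂ) * Complex.I) • H)

/-- The fixed point set `g^f` of an automorphism `f` inside the real form `g`. -/
def FixIn (g : LieSubalgebra ℝ gC) (f : gC ≃ₗ⁅ℂ⁆ gC) : Set gC :=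
  {x : gC | x ∈ g ∧ f x = x}

/-- Root space decomposition: `gC` is spanned by `t_ℂ` together with the root spaces. -/
def SpansByRoots (t : LieSubalgebra ℝ gC) : Prop :=
  Submodule.span ℂ ((cspan gC t : Set gC) ∪
    {X : gC | ∃ a : Module.Dual ℂ gC, IsRoot gC t a ∧ X ∈ rootSpace gC t a}) = ⊤


/-! ### Auxiliary infrastructure -/

set_option linter.unusedSectionVars false
set_option maxHeartbeats 1000000

section Aux

variable {gC : Type} [LieRing gC] [LieAlgebra ℂ gC] [LieAlgebra ℝ gC]
  [IsScalarTower ℝ ℂ gC] [FiniteDimensional ℂ gC]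

lemma mul_apply (f g : gC ≃ₗ⁅ℂ⁆ gC) (x : gC) : (f * g) x = f (g x) := rfl
lemma one_apply' (x : gC) : (1 : gC ≃ₗ⁅ℂ⁆ gC) x = x := rfl
lemma inv_apply (f : gC ≃ₗ⁅ℂ⁆ gC) (x : gC) : f⁻¹ x = f.symm x := rfl

lemma emap_smul (f : gC ≃ₗ⁅ℂ⁆ gC) (c : ℂ) (x : gC) : f (c • x) = c • f x :=
  f.toLinearEquiv.map_smul c x
lemma emap_add (f : gC ≃ₗ⁅ℂ⁆ gC) (x y : gC) : f (x + y) = f x + f y :=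
  f.toLinearEquiv.map_add x y
lemma emap_lie (f : gC ≃ₗ⁅ℂ⁆ gC) (x y : gC) : f ⁅x,y⁆ = ⁅f x, f y⁆ :=
  f.toLieHom.map_lie x y
lemma emap_zero (f : gC ≃ₗ⁅ℂ⁆ gC) : f 0 = 0 := f.toLinearEquiv.map_zero
lemma emap_neg (f : gC ≃ₗ⁅ℂ⁆ gC) (x : gC) : f (-x) = -f x := f.toLinearEquiv.map_neg x

lemma rsmul (r : ℝ) (x : gC) : (r : ℂ) • x = r • x := by
  rw [← algebraMap_smul (R := ℝ) ℂ r x]; norm_num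

lemma csmul_decomp (c : ℂ) (x y : gC) :
    c • (x + I • y) = ((c.re : ℂ) • x - (c.im : ℂ) • y) + I • ((c.im : ℂ) • x + (c.re : ℂ) • y) := by
  have hc : c = (c.re : ℂ) + (c.im : ℂ) * I := by simp [Complex.ext_iff]
  nth_rewrite 1 [hc]
  match_scalars <;> simp [Complex.ext_iff]

lemma lie_decomp (x y x' y' : gC) :
    ⁅x + I • y, x' + I • y'⁆ = (⁅x,x'⁆ - ⁅y,y'⁆) + I • (⁅x,y'⁆ + ⁅y,x'⁆) := by
  simp only [lie_add, add_lie, lie_smul, smul_lie, smul_smul, Complex.I_mul_I, smul_add]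
  match_scalars <;> simp [Complex.ext_iff]

variable {g t : LieSubalgebra ℝ gC}

lemma decomp_unique (hg : IsCompactForm gC g) {x y x' y' : gC}
    (hx : x ∈ g) (hy : y ∈ g) (hx' : x' ∈ g) (hy' : y' ∈ g)
    (h : x + I • y = x' + I • y') : x = x' ∧ y = y' := by
  have h1 : x - x' = I • (y' - y) := by
    rw [smul_sub, sub_eq_iff_eq_add]
    calc x = (x + I•y) - I•y := by abel
    _ = (x' + I•y') - I•y := by rw [h]
    _ = I • y' - I • y + x' := by abel
  have hyy : y' - y ∈ g := g.toSubmodule.sub_mem hy' hy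
  have hIyy : I • (y' - y) ∈ g := h1 ▸ g.toSubmodule.sub_mem hx hx'
  have h0 : y' - y = 0 := hg.inj _ hyy hIyy
  have hy2 : y = y' := by
    have := sub_eq_zero.mp h0; exact this.symm
  refine ⟨?_, hy2⟩
  rw [h0, smul_zero, sub_eq_zero] at h1
  exact h1

noncomputable def theta (hg : IsCompactForm gC g) (z : gC) : gC :=
  (hg.spans z).choose - I • (hg.spans z).choose_spec.2.choose

lemma theta_spec (hg : IsCompactForm gC g) (z : gC) :
    ∃ x ∈ g, ∃ y ∈ g, z = x + I • y ∧ theta hg z = x - I • y :=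
  ⟨(hg.spans z).choose, (hg.spans z).choose_spec.1, (hg.spans z).choose_spec.2.choose,
    (hg.spans z).choose_spec.2.choose_spec.1, (hg.spans z).choose_spec.2.choose_spec.2, rfl⟩

lemma theta_eval (hg : IsCompactForm gC g) {x y : gC} (hx : x ∈ g) (hy : y ∈ g) :
    theta hg (x + I • y) = x - I • y := by
  obtain ⟨A, hA, B, hB, hz, ht⟩ := theta_spec hg (x + I • y)
  obtain ⟨e1, e2⟩ := decomp_unique hg hx hy hA hB hz
  rw [ht, ← e1, ← e2]

lemma theta_add (hg : IsCompactForm gC g) (z w : gC) :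
    theta hg (z + w) = theta hg z + theta hg w := by
  obtain ⟨x, hx, y, hy, hz, htz⟩ := theta_spec hg z
  obtain ⟨x', hx', y', hy', hw, htw⟩ := theta_spec hg w
  have h1 : z + w = (x + x') + I • (y + y') := by rw [hz, hw]; module
  rw [h1, theta_eval hg (g.toSubmodule.add_mem hx hx') (g.toSubmodule.add_mem hy hy'), htz, htw]
  module

lemma theta_smul (hg : IsCompactForm gC g) (c : ℂ) (z : gC) :
    theta hg (c • z) = (starRingEnd ℂ) c • theta hg z := by
  obtain ⟨x, hx, y, hy, hz, ht⟩ := theta_spec hg z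
  have h1 : c • z = ((c.re:ℂ)•x - (c.im:ℂ)•y) + I • ((c.im:ℂ)•x + (c.re:ℂ)•y) := by
    rw [hz, csmul_decomp]
  have hm1 : (c.re:ℂ)•x - (c.im:ℂ)•y ∈ g := by
    rw [rsmul, rsmul]
    exact g.toSubmodule.sub_mem (g.toSubmodule.smul_mem _ hx) (g.toSubmodule.smul_mem _ hy)
  have hm2 : (c.im:ℂ)•x + (c.re:ℂ)•y ∈ g := by
    rw [rsmul, rsmul]
    exact g.toSubmodule.add_mem (g.toSubmodule.smul_mem _ hx) (g.toSubmodule.smul_mem _ hy)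
  rw [h1, theta_eval hg hm1 hm2, ht]
  have hcc : (starRingEnd ℂ) c = (c.re:ℂ) - (c.im:ℂ)*I := by simp [Complex.ext_iff]
  rw [hcc]
  match_scalars <;> simp [Complex.ext_iff] <;> ring

lemma theta_of_mem (hg : IsCompactForm gC g) {z : gC} (hz : z ∈ g) : theta hg z = z := by
  have := theta_eval hg (y := 0) hz g.zero_mem
  simpa using this

lemma mem_of_theta_eq (hg : IsCompactForm gC g) {z : gC} (h : theta hg z = z) : z ∈ g := by
  obtain ⟨x, hx, y, hy, hz, ht⟩ := theta_spec hg z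
  have h1 : x - I•y = x + I•y := by rw [← ht, h, hz]
  have h5 : (2:ℂ) • (I • y) = 0 := by
    have e : x + I•y - (x - I•y) = (2:ℂ)•(I•y) := by match_scalars <;> ring
    rw [h1, sub_self] at e; exact e.symm
  have h6 : y = 0 := by
    rcases smul_eq_zero.mp h5 with h | h
    · norm_num at h
    · rcases smul_eq_zero.mp h with h | h
      · exact absurd h I_ne_zero
      · exact h
  rw [hz, h6, smul_zero, add_zero]; exact hx

lemma theta_theta (hg : IsCompactForm gC g) (z : gC) : theta hg (theta hg z) = z := by
  obtain ⟨x, hx, y, hy, hz, ht⟩ := theta_spec hg z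
  have h1 : theta hg z = x + I • (-y) := by rw [ht]; module
  rw [h1, theta_eval hg hx (g.toSubmodule.neg_mem hy), hz]
  module

lemma theta_inj (hg : IsCompactForm gC g) {z w : gC} (h : theta hg z = theta hg w) : z = w := by
  rw [← theta_theta hg z, h, theta_theta]

lemma theta_lie (hg : IsCompactForm gC g) (z w : gC) :
    theta hg ⁅z, w⁆ = ⁅theta hg z, theta hg w⁆ := by
  obtain ⟨x, hx, y, hy, hz, htz⟩ := theta_spec hg z
  obtain ⟨x', hx', y', hy', hw, htw⟩ := theta_spec hg w
  have h1 : ⁅z, w⁆ = (⁅x,x'⁆ - ⁅y,y'⁆) + I • (⁅x,y'⁆ + ⁅y,x'⁆) := by rw [hz, hw, lie_decomp]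
  rw [h1, theta_eval hg
    (g.toSubmodule.sub_mem (g.lie_mem hx hx') (g.lie_mem hy hy'))
    (g.toSubmodule.add_mem (g.lie_mem hx hy') (g.lie_mem hy hx')), htz, htw]
  have e2 : x - I • y = x + I • (-y) := by module
  have e3 : x' - I • y' = x' + I • (-y') := by module
  rw [e2, e3, lie_decomp]
  simp only [lie_neg, neg_lie, neg_neg]
  module

lemma cspan_lie (hab : ∀ x ∈ t, ∀ y ∈ t, ⁅x, y⁆ = (0:gC)) {H H' : gC}
    (hH : H ∈ cspan gC t) (hH' : H' ∈ cspan gC t) : ⁅H, H'⁆ = 0 := by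
  have step1 : ∀ x ∈ (t : Set gC), ⁅x, H'⁆ = 0 := by
    intro x hx
    refine Submodule.span_induction (p := fun w _ => ⁅x, w⁆ = 0) ?_ ?_ ?_ ?_ hH'
    · intro y hy; exact hab x hx y hy
    · simp
    · intro a b _ _ ha hb; rw [lie_add, ha, hb, add_zero]
    · intro c a _ ha; rw [lie_smul, ha, smul_zero]
  refine Submodule.span_induction (p := fun w _ => ⁅w, H'⁆ = 0) ?_ ?_ ?_ ?_ hH
  · exact step1
  · simp
  · intro a b _ _ ha hb; rw [add_lie, ha, hb, add_zero]
  · intro c a _ ha; rw [smul_lie, ha, smul_zero]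

lemma mem_cspan_decomp {z : gC} (hz : z ∈ cspan gC t) :
    ∃ x ∈ t, ∃ y ∈ t, z = x + I • y := by
  refine Submodule.span_induction ?_ ?_ ?_ ?_ hz
  · intro x hx; exact ⟨x, hx, 0, t.zero_mem, by simp⟩
  · exact ⟨0, t.zero_mem, 0, t.zero_mem, by simp⟩
  · rintro a b _ _ ⟨x, hx, y, hy, rfl⟩ ⟨x', hx', y', hy', rfl⟩
    exact ⟨x + x', t.toSubmodule.add_mem hx hx', y + y', t.toSubmodule.add_mem hy hy',
      by module⟩
  · rintro c a _ ⟨x, hx, y, hy, rfl⟩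
    refine ⟨c.re • x - c.im • y,
      t.toSubmodule.sub_mem (t.toSubmodule.smul_mem _ hx) (t.toSubmodule.smul_mem _ hy),
      c.im • x + c.re • y,
      t.toSubmodule.add_mem (t.toSubmodule.smul_mem _ hx) (t.toSubmodule.smul_mem _ hy), ?_⟩
    have := csmul_decomp c x y
    simp only [rsmul] at this
    exact this

lemma theta_cspan (hg : IsCompactForm gC g) (hle : t ≤ g) {z : gC} (hz : z ∈ cspan gC t) :
    theta hg z ∈ cspan gC t := by
  obtain ⟨x, hx, y, hy, rfl⟩ := mem_cspan_decomp hz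
  rw [theta_eval hg (hle hx) (hle hy)]
  have e : x - I • y = x + I • (-y) := by module
  rw [e]
  exact Submodule.add_mem _ (Submodule.subset_span hx)
    (Submodule.smul_mem _ I (Submodule.subset_span (t.toSubmodule.neg_mem hy)))

lemma map_cspan (f : gC ≃ₗ⁅ℂ⁆ gC) (hft : (⇑f) '' (t : Set gC) = (t : Set gC)) {z : gC}
    (hz : z ∈ cspan gC t) : f z ∈ cspan gC t := by
  have h : Submodule.map (f.toLinearEquiv : gC →ₗ[ℂ] gC) (cspan gC t) = cspan gC t := by
    rw [cspan, Submodule.map_span]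
    norm_num [hft]
  rw [← h]
  exact Submodule.mem_map_of_mem hz

lemma root_im (hg : IsCompactForm gC g) (hle : t ≤ g) {b : Module.Dual ℂ gC}
    (hb : IsRoot gC t b) {H : gC} (hH : H ∈ t) : (b H).re = 0 := by
  by_contra hp
  obtain ⟨-, X, hX0, hXr⟩ := hb
  obtain ⟨u, hu, v, hv, hXd, -⟩ := theta_spec hg X
  have hbr : ⁅H, X⁆ = b H • X := hXr H (Submodule.subset_span hH)
  set p := (b H).re with hpdef
  set q := (b H).im with hqdef
  have h1 : ⁅H,u⁆ + I•⁅H,v⁆ = (p•u - q•v) + I•(q•u + p•v) := by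
    have e := csmul_decomp (b H) u v
    simp only [rsmul] at e
    rw [← e, ← hXd, ← hbr, hXd, lie_add, lie_smul]
  have hHg := hle hH
  obtain ⟨eu, ev⟩ := decomp_unique hg (g.lie_mem hHg hu) (g.lie_mem hHg hv)
    (g.toSubmodule.sub_mem (g.toSubmodule.smul_mem _ hu) (g.toSubmodule.smul_mem _ hv))
    (g.toSubmodule.add_mem (g.toSubmodule.smul_mem _ hu) (g.toSubmodule.smul_mem _ hv)) h1
  set U : ↥g := ⟨u, hu⟩
  set V : ↥g := ⟨v, hv⟩
  set Hg : ↥g := ⟨H, hHg⟩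
  have eU : ⁅Hg, U⁆ = p•U - q•V := by
    apply Subtype.ext
    rw [LieSubalgebra.coe_bracket]
    push_cast
    exact eu
  have eV : ⁅Hg, V⁆ = q•U + p•V := by
    apply Subtype.ext
    rw [LieSubalgebra.coe_bracket]
    push_cast
    exact ev
  set κ := killingForm ℝ ↥g with hκ
  have k0 : ∀ A : ↥g, κ ⁅Hg, A⁆ A = 0 := by
    intro A
    rw [hκ, LieModule.traceForm_apply_lie_apply]
    simp
  have k1 : p * κ U U - q * κ V U = 0 := by
    have := k0 U
    rw [eU] at this
    simpa [map_sub, map_smul, smul_eq_mul] using this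
  have k2 : q * κ U V + p * κ V V = 0 := by
    have := k0 V
    rw [eV] at this
    simpa [map_add, map_smul, smul_eq_mul] using this
  have kc : κ V U = κ U V := LieModule.traceForm_comm ℝ ↥g ↥g V U
  have ksum : p * (κ U U + κ V V) = 0 := by
    rw [kc] at k1
    nlinarith [k1, k2]
  have hUV : κ U U + κ V V = 0 := by
    rcases mul_eq_zero.mp ksum with h | h
    · exact absurd h hp
    · exact h
  have hU0 : U = 0 := by
    by_contra h
    have h1' := hg.negdef U h
    have h2 : κ V V ≤ 0 := by
      rcases eq_or_ne V 0 with h'' | h'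
      · rw [h'']; simp [hκ]
      · exact le_of_lt (hg.negdef V h')
    linarith
  have hV0 : V = 0 := by
    by_contra h
    have h1' := hg.negdef V h
    have h2 : κ U U ≤ 0 := by
      rcases eq_or_ne U 0 with h'' | h'
      · rw [h'']; simp [hκ]
      · exact le_of_lt (hg.negdef U h')
    linarith
  apply hX0
  have hu0 : u = 0 := by simpa [U, Subtype.ext_iff] using hU0
  have hv0 : v = 0 := by simpa [V, Subtype.ext_iff] using hV0
  rw [hXd, hu0, hv0, smul_zero, add_zero]

lemma conj_bH (hg : IsCompactForm gC g) (hle : t ≤ g) {b : Module.Dual ℂ gC}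
    (hb : IsRoot gC t b) {H : gC} (hH : H ∈ cspan gC t) :
    (starRingEnd ℂ) (b (theta hg H)) = - b H := by
  obtain ⟨x, hx, y, hy, rfl⟩ := mem_cspan_decomp hH
  rw [theta_eval hg (hle hx) (hle hy)]
  have hbx := root_im hg hle hb hx
  have hby := root_im hg hle hb hy
  have hbI : b (x + I•y) = b x + I * b y := by simp [map_add, map_smul, smul_eq_mul]
  have hbt : b (x - I•y) = b x - I * b y := by simp [map_sub, map_smul, smul_eq_mul]
  rw [hbt, hbI]
  simp only [Complex.ext_iff]
  constructor <;> simp [hbx, hby] <;> ring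

lemma theta_rootSpace (hg : IsCompactForm gC g) (hle : t ≤ g) {b : Module.Dual ℂ gC}
    (hb : IsRoot gC t b) {X : gC} (hX : X ∈ rootSpace gC t b) :
    ∀ H ∈ cspan gC t, ⁅H, theta hg X⁆ = (- b H) • theta hg X := by
  intro H hH
  have h1 : ⁅theta hg H, X⁆ = b (theta hg H) • X := hX _ (theta_cspan hg hle hH)
  calc ⁅H, theta hg X⁆ = theta hg ⁅theta hg H, X⁆ := by
        rw [theta_lie, theta_theta]
    _ = theta hg (b (theta hg H) • X) := by rw [h1]
    _ = (starRingEnd ℂ) (b (theta hg H)) • theta hg X := theta_smul hg _ _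
    _ = (- b H) • theta hg X := by rw [conj_bH hg hle hb hH]

noncomputable def conjDual (hg : IsCompactForm gC g) (b : Module.Dual ℂ gC) :
    Module.Dual ℂ gC where
  toFun z := (starRingEnd ℂ) (b (theta hg z))
  map_add' x y := by
    show (starRingEnd ℂ) (b (theta hg (x + y))) = _
    rw [theta_add, map_add, map_add]
  map_smul' c x := by
    simp only [theta_smul, map_smul, smul_eq_mul, map_mul, RingHom.id_apply, Complex.conj_conj]

lemma conjDual_isRoot (hg : IsCompactForm gC g) (hle : t ≤ g) {b : Module.Dual ℂ gC}
    (hb : IsRoot gC t b) : IsRoot gC t (conjDual hg b) := by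
  obtain ⟨⟨H0, hH0, hbH0⟩, X, hX0, hXr⟩ := hb
  constructor
  · refine ⟨theta hg H0, theta_cspan hg hle hH0, ?_⟩
    show (starRingEnd ℂ) (b (theta hg (theta hg H0))) ≠ 0
    rw [theta_theta]
    simpa using hbH0
  · refine ⟨theta hg X, fun h => hX0 ?_, ?_⟩
    · have := congrArg (theta hg) h
      rw [theta_theta, theta_of_mem hg g.zero_mem] at this
      exact this
    · intro H hH
      have h1 := theta_rootSpace hg hle ⟨⟨H0, hH0, hbH0⟩, X, hX0, hXr⟩ hXr H hH
      rw [h1]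
      congr 1
      show - b H = (starRingEnd ℂ) (b (theta hg H))
      rw [conj_bH hg hle ⟨⟨H0, hH0, hbH0⟩, X, hX0, hXr⟩ hH]

lemma sum_eval {n : ℕ} {α : ℕ → Module.Dual ℂ gC} {K : ℕ → gC}
    (hsys : IsSimpleSystem gC t n α K) {i : ℕ} (hi : i ∈ Finset.Icc 1 n) (f : ℕ → ℂ) :
    ∑ j ∈ Finset.Icc 1 n, f j * α j (K i) = f i := by
  rw [Finset.sum_eq_single i]
  · rw [hsys.K_dual i hi i hi, if_pos rfl, mul_one]
  · intro j hj hne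
    rw [hsys.K_dual j hj i hi, if_neg hne, mul_zero]
  · intro h; exact absurd hi h

lemma root_K_int (hg : IsCompactForm gC g) (hle : t ≤ g)
    {n : ℕ} {α : ℕ → Module.Dual ℂ gC} {K : ℕ → gC}
    (hsys : IsSimpleSystem gC t n α K)
    {δ : Module.Dual ℂ gC} {m : ℕ → ℕ} (hδ : IsHighestRoot gC t n α δ m)
    {i : ℕ} (hi : i ∈ Finset.Icc 1 n)
    {b : Module.Dual ℂ gC} (hb : IsRoot gC t b) :
    ∃ k : ℤ, b (K i) = (k : ℂ) ∧ k.natAbs ≤ m i := by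
  have hKmem := hsys.K_mem i hi
  rcases hsys.decomp b hb with ⟨k, hk⟩ | ⟨k, hk⟩
  · refine ⟨(k i : ℤ), ?_, ?_⟩
    · rw [hk _ hKmem, sum_eval hsys hi (fun j => (k j : ℂ))]
      push_cast; ring
    · have := hδ.highest b k hb hk i hi
      simpa using this
  · have hk' : ∀ H ∈ cspan gC t, conjDual hg b H
        = ∑ j ∈ Finset.Icc 1 n, (k j : ℂ) * α j H := by
      intro H hH
      show (starRingEnd ℂ) (b (theta hg H)) = _
      rw [conj_bH hg hle hb hH, hk _ hH, neg_neg]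
    have hbound := hδ.highest _ k (conjDual_isRoot hg hle hb) hk' i hi
    refine ⟨-(k i : ℤ), ?_, by simpa using hbound⟩
    rw [hk _ hKmem]
    rw [sum_eval hsys hi (fun j => (k j : ℂ))]
    push_cast; ring

noncomputable def cst : ℂ := ((Real.pi / 2 : ℝ) : ℂ) * Complex.I

lemma sigmaAd_def (expAd : gC → (gC ≃ₗ⁅ℂ⁆ gC)) (H : gC) :
    sigmaAd gC expAd H = expAd (cst • H) := rfl

lemma sigma_cspan_fix {expAd : gC → (gC ≃ₗ⁅ℂ⁆ gC)} (hexp : IsExpAd gC expAd)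
    (hab : ∀ x ∈ t, ∀ y ∈ t, ⁅x, y⁆ = (0:gC)) {H₀ : gC} (hH₀ : H₀ ∈ cspan gC t)
    {H : gC} (hH : H ∈ cspan gC t) : sigmaAd gC expAd H₀ H = H := by
  have h0 : ⁅cst • H₀, H⁆ = (0:ℂ) • H := by
    rw [smul_lie, cspan_lie hab hH₀ hH, smul_zero, zero_smul]
  rw [sigmaAd_def, hexp.eig _ _ _ h0, Complex.exp_zero, one_smul]

lemma sigma_root_apply {expAd : gC → (gC ≃ₗ⁅ℂ⁆ gC)} (hexp : IsExpAd gC expAd)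
    {H₀ : gC} (hH₀ : H₀ ∈ cspan gC t) {b : Module.Dual ℂ gC} {X : gC}
    (hX : X ∈ rootSpace gC t b) :
    sigmaAd gC expAd H₀ X = Complex.exp (cst * b H₀) • X := by
  have h0 : ⁅cst • H₀, X⁆ = (cst * b H₀) • X := by
    rw [smul_lie, hX H₀ hH₀, smul_smul]
  rw [sigmaAd_def, hexp.eig _ _ _ h0]

lemma zeta_pow4 (k : ℤ) : Complex.exp (cst * k) ^ 4 = 1 := by
  rw [← Complex.exp_nat_mul]
  have h : (4:ℕ) * (cst * k) = (k:ℂ) * (2 * (Real.pi:ℝ) * I) := by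
    rw [cst]; push_cast; ring
  rw [h]
  exact Complex.exp_int_mul_two_pi_mul_I k

lemma zeta_ne_one {k : ℤ} (hk : k ≠ 0) (hk3 : k.natAbs ≤ 3) :
    Complex.exp (cst * k) ≠ 1 := by
  intro h
  rw [Complex.exp_eq_one_iff] at h
  obtain ⟨n, hn⟩ := h
  have hπI : (Real.pi:ℂ) * I ≠ 0 := by
    apply mul_ne_zero
    · exact_mod_cast Real.pi_ne_zero
    · exact I_ne_zero
  have h2 : (Real.pi:ℂ) * I * ((k:ℂ) - 4*n) = 0 := by
    rw [cst] at hn; push_cast at hn ⊢; linear_combination 2 * hn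
  have h3 : (k:ℂ) - 4*n = 0 := by
    rcases mul_eq_zero.mp h2 with h' | h'
    · exact absurd h' hπI
    · exact h'
  have h4 : (k:ℂ) = ((4*n : ℤ) : ℂ) := by push_cast; linear_combination h3
  have h5 : k = 4*n := by exact_mod_cast h4
  omega

lemma geom4 {ζ : ℂ} (h4 : ζ^4 = 1) (h1 : ζ ≠ 1) : 1 + ζ + ζ^2 + ζ^3 = 0 := by
  have h : (ζ - 1) * (1 + ζ + ζ^2 + ζ^3) = ζ^4 - 1 := by ring
  rw [h4, sub_self] at h
  rcases mul_eq_zero.mp h with h' | h'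
  · exact absurd (by linear_combination h') h1
  · exact h'

lemma ad_vanish (hg : IsCompactForm gC g) (hle : t ≤ g)
    (hab : ∀ x ∈ t, ∀ y ∈ t, ⁅x, y⁆ = (0:gC))
    {expAd : gC → (gC ≃ₗ⁅ℂ⁆ gC)} (hexp : IsExpAd gC expAd)
    (hspan : SpansByRoots gC t)
    {n : ℕ} {α : ℕ → Module.Dual ℂ gC} {K : ℕ → gC} (hsys : IsSimpleSystem gC t n α K)
    {δ : Module.Dual ℂ gC} {m : ℕ → ℕ} (hδ : IsHighestRoot gC t n α δ m)
    {i : ℕ} (hi : i ∈ Finset.Icc 1 n) (hmi : m i = 3) (z : gC) :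
    (letI σ := sigmaAd gC expAd (K i);
     ⁅K i, z + σ z + σ (σ z) + σ (σ (σ z))⁆ = 0) := by
  set σ := sigmaAd gC expAd (K i) with hσ
  have hKc := hsys.K_mem i hi
  have hz : z ∈ Submodule.span ℂ ((cspan gC t : Set gC) ∪
      {X : gC | ∃ a : Module.Dual ℂ gC, IsRoot gC t a ∧ X ∈ rootSpace gC t a}) := by
    rw [hspan]; trivial
  refine Submodule.span_induction ?_ ?_ ?_ ?_ hz
  · rintro x (hx | ⟨b, hb, hx⟩)
    · have h1 : σ x = x := sigma_cspan_fix hexp hab hKc hx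
      simp only [h1]
      have h2 : x + x + x + x = (4:ℂ) • x := by module
      rw [h2, lie_smul, cspan_lie hab hKc hx, smul_zero]
    · obtain ⟨k, hbk, hk3⟩ := root_K_int hg hle hsys hδ hi hb
      have hx1 : σ x = Complex.exp (cst * k) • x := by
        rw [hσ, sigma_root_apply hexp hKc hx, hbk]
      set ζ := Complex.exp (cst * (k:ℂ)) with hζ
      have hσ2 : σ (σ x) = ζ^2 • x := by
        rw [hx1, emap_smul, hx1, smul_smul, ← sq]
      have hσ3 : σ (σ (σ x)) = ζ^3 • x := by
        rw [hσ2, emap_smul, hx1, smul_smul]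
        have e : ζ^2*ζ = ζ^3 := by ring
        rw [e]
      rw [hσ3, hσ2, hx1]
      have hsum : x + ζ • x + ζ^2 • x + ζ^3 • x = (1 + ζ + ζ^2 + ζ^3) • x := by module
      rw [hsum, lie_smul, hx _ hKc, hbk, smul_smul]
      have hz0 : (1 + ζ + ζ^2 + ζ^3) * (k:ℂ) = 0 := by
        rcases eq_or_ne k 0 with rfl | hk0
        · simp
        · rw [hζ, geom4 (zeta_pow4 k) (zeta_ne_one hk0 (hmi ▸ hk3)), zero_mul]
      rw [hz0, zero_smul]
  · simp [emap_zero]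
  · intro a b _ _ ha hb
    simp only [emap_add]
    have h : (a + b) + (σ a + σ b) + (σ (σ a) + σ (σ b)) + (σ (σ (σ a)) + σ (σ (σ b)))
        = (a + σ a + σ (σ a) + σ (σ (σ a))) + (b + σ b + σ (σ b) + σ (σ (σ b))) := by abel
    rw [h, lie_add, ha, hb, add_zero]
  · intro c a _ ha
    simp only [emap_smul]
    have h : c • a + c • σ a + c • σ (σ a) + c • σ (σ (σ a))
        = c • (a + σ a + σ (σ a) + σ (σ (σ a))) := by module
    rw [h, lie_smul, ha, smul_zero]

lemma fix_ad_zero (hg : IsCompactForm gC g) (hle : t ≤ g)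
    (hab : ∀ x ∈ t, ∀ y ∈ t, ⁅x, y⁆ = (0:gC))
    {expAd : gC → (gC ≃ₗ⁅ℂ⁆ gC)} (hexp : IsExpAd gC expAd)
    (hspan : SpansByRoots gC t)
    {n : ℕ} {α : ℕ → Module.Dual ℂ gC} {K : ℕ → gC} (hsys : IsSimpleSystem gC t n α K)
    {δ : Module.Dual ℂ gC} {m : ℕ → ℕ} (hδ : IsHighestRoot gC t n α δ m)
    {i : ℕ} (hi : i ∈ Finset.Icc 1 n) (hmi : m i = 3) {Y : gC}
    (hY : Y ∈ FixIn gC g (sigmaAd gC expAd (K i))) : ⁅K i, Y⁆ = 0 := by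
  obtain ⟨hYg, hYfix⟩ := hY
  have h := ad_vanish hg hle hab hexp hspan hsys hδ hi hmi Y
  simp only [hYfix] at h
  have h2 : Y + Y + Y + Y = (4:ℂ) • Y := by module
  rw [h2, lie_smul] at h
  simpa using (smul_eq_zero.mp h).resolve_left (by norm_num)

lemma theta_sigma (hg : IsCompactForm gC g) (hle : t ≤ g)
    (hab : ∀ x ∈ t, ∀ y ∈ t, ⁅x, y⁆ = (0:gC))
    {expAd : gC → (gC ≃ₗ⁅ℂ⁆ gC)} (hexp : IsExpAd gC expAd)
    (hspan : SpansByRoots gC t)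
    {n : ℕ} {α : ℕ → Module.Dual ℂ gC} {K : ℕ → gC} (hsys : IsSimpleSystem gC t n α K)
    {δ : Module.Dual ℂ gC} {m : ℕ → ℕ} (hδ : IsHighestRoot gC t n α δ m)
    {i : ℕ} (hi : i ∈ Finset.Icc 1 n) (z : gC) :
    theta hg (sigmaAd gC expAd (K i) (theta hg z)) = sigmaAd gC expAd (K i) z := by
  set σ := sigmaAd gC expAd (K i) with hσ
  have hKc := hsys.K_mem i hi
  have hz : z ∈ Submodule.span ℂ ((cspan gC t : Set gC) ∪
      {X : gC | ∃ a : Module.Dual ℂ gC, IsRoot gC t a ∧ X ∈ rootSpace gC t a}) := by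
    rw [hspan]; trivial
  refine Submodule.span_induction ?_ ?_ ?_ ?_ hz
  · rintro x (hx | ⟨b, hb, hx⟩)
    · rw [hσ, sigma_cspan_fix hexp hab hKc (theta_cspan hg hle hx), theta_theta,
        sigma_cspan_fix hexp hab hKc hx]
    · obtain ⟨k, hbk, hk3⟩ := root_K_int hg hle hsys hδ hi hb
      have hσθ : σ (theta hg x) = Complex.exp (-(cst * k)) • theta hg x := by
        have h0 : ⁅cst • K i, theta hg x⁆ = (-(cst * k)) • theta hg x := by
          rw [smul_lie, theta_rootSpace hg hle hb hx _ hKc, hbk, smul_smul]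
          congr 1; ring
        rw [hσ, sigmaAd_def, hexp.eig _ _ _ h0]
      have hσx : σ x = Complex.exp (cst * k) • x := by
        rw [hσ, sigma_root_apply hexp hKc hx, hbk]
      rw [hσθ, theta_smul, theta_theta, hσx]
      congr 1
      rw [← Complex.exp_conj]
      congr 1
      rw [map_neg, map_mul, map_intCast, cst, map_mul, Complex.conj_ofReal, Complex.conj_I]
      ring
  · simp [emap_zero, theta_of_mem hg g.zero_mem]
  · intro a b _ _ ha hb
    rw [theta_add, emap_add, theta_add, ha, hb, emap_add]
  · intro c a _ ha
    rw [theta_smul, emap_smul, theta_smul, Complex.conj_conj, ha, emap_smul]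

lemma sigma_mem_g (hg : IsCompactForm gC g) (hle : t ≤ g)
    (hab : ∀ x ∈ t, ∀ y ∈ t, ⁅x, y⁆ = (0:gC))
    {expAd : gC → (gC ≃ₗ⁅ℂ⁆ gC)} (hexp : IsExpAd gC expAd)
    (hspan : SpansByRoots gC t)
    {n : ℕ} {α : ℕ → Module.Dual ℂ gC} {K : ℕ → gC} (hsys : IsSimpleSystem gC t n α K)
    {δ : Module.Dual ℂ gC} {m : ℕ → ℕ} (hδ : IsHighestRoot gC t n α δ m)
    {i : ℕ} (hi : i ∈ Finset.Icc 1 n) {x : gC} (hx : x ∈ g) :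
    sigmaAd gC expAd (K i) x ∈ g := by
  apply mem_of_theta_eq hg
  have h := theta_sigma hg hle hab hexp hspan hsys hδ hi x
  rw [theta_of_mem hg hx] at h
  exact h

lemma fix_parts (hg : IsCompactForm gC g) (hle : t ≤ g)
    (hab : ∀ x ∈ t, ∀ y ∈ t, ⁅x, y⁆ = (0:gC))
    {expAd : gC → (gC ≃ₗ⁅ℂ⁆ gC)} (hexp : IsExpAd gC expAd)
    (hspan : SpansByRoots gC t)
    {n : ℕ} {α : ℕ → Module.Dual ℂ gC} {K : ℕ → gC} (hsys : IsSimpleSystem gC t n α K)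
    {δ : Module.Dual ℂ gC} {m : ℕ → ℕ} (hδ : IsHighestRoot gC t n α δ m)
    {i : ℕ} (hi : i ∈ Finset.Icc 1 n) {X u v : gC} (hu : u ∈ g) (hv : v ∈ g)
    (hX : X = u + I • v) (hfix : sigmaAd gC expAd (K i) X = X) :
    u ∈ FixIn gC g (sigmaAd gC expAd (K i)) ∧ v ∈ FixIn gC g (sigmaAd gC expAd (K i)) := by
  set σ := sigmaAd gC expAd (K i) with hσ
  have hσu : σ u ∈ g := sigma_mem_g hg hle hab hexp hspan hsys hδ hi hu
  have hσv : σ v ∈ g := sigma_mem_g hg hle hab hexp hspan hsys hδ hi hv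
  have h1 : σ u + I • σ v = u + I • v := by
    rw [← emap_smul, ← emap_add, ← hX, hfix, hX]
  obtain ⟨e1, e2⟩ := decomp_unique hg hσu hσv hu hv h1
  exact ⟨⟨hu, e1⟩, ⟨hv, e2⟩⟩

lemma eq_zero_of_ann [LieAlgebra.IsSimple ℂ gC] (hspan : SpansByRoots gC t)
    (hab : ∀ x ∈ t, ∀ y ∈ t, ⁅x, y⁆ = (0:gC)) {a : gC} (ha : a ∈ cspan gC t)
    (hroots : ∀ b : Module.Dual ℂ gC, IsRoot gC t b → b a = 0) : a = 0 := by
  have hz : ∀ z : gC, ⁅a, z⁆ = 0 := by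
    intro z
    have hz' : z ∈ Submodule.span ℂ ((cspan gC t : Set gC) ∪
        {X : gC | ∃ b : Module.Dual ℂ gC, IsRoot gC t b ∧ X ∈ rootSpace gC t b}) := by
      rw [hspan]; trivial
    refine Submodule.span_induction ?_ ?_ ?_ ?_ hz'
    · rintro x (hx | ⟨b, hb, hx⟩)
      · exact cspan_lie hab ha hx
      · rw [hx a ha, hroots b hb, zero_smul]
    · simp
    · intro x y _ _ hx hy; rw [lie_add, hx, hy, add_zero]
    · intro c x _ hx; rw [lie_smul, hx, smul_zero]
  have hcen : a ∈ LieAlgebra.center ℂ gC := by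
    rw [LieAlgebra.center, LieModule.mem_maxTrivSubmodule]
    intro x
    rw [← lie_skew, hz x, neg_zero]
  rw [LieAlgebra.center_eq_bot ℂ gC] at hcen
  simpa using hcen

lemma cent_eq [LieAlgebra.IsSimple ℂ gC] (hg : IsCompactForm gC g) (hle : t ≤ g)
    (hab : ∀ x ∈ t, ∀ y ∈ t, ⁅x, y⁆ = (0:gC))
    {expAd : gC → (gC ≃ₗ⁅ℂ⁆ gC)} (hexp : IsExpAd gC expAd)
    (hspan : SpansByRoots gC t)
    {n : ℕ} {α : ℕ → Module.Dual ℂ gC} {K : ℕ → gC} (hsys : IsSimpleSystem gC t n α K)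
    {δ : Module.Dual ℂ gC} {m : ℕ → ℕ} (hδ : IsHighestRoot gC t n α δ m)
    {i : ℕ} (hi : i ∈ Finset.Icc 1 n) {X : gC} (hX : X ∈ cspan gC t)
    (hcomm : ∀ Y ∈ FixIn gC g (sigmaAd gC expAd (K i)), ⁅X, Y⁆ = 0) :
    X = α i X • K i := by
  have hKi := hsys.K_mem i hi
  have hαj : ∀ j ∈ Finset.Icc 1 n, j ≠ i → α j X = 0 := by
    intro j hj hne
    obtain ⟨hex, E, hE0, hEr⟩ := hsys.isRoot j hj
    have hσE : sigmaAd gC expAd (K i) E = E := by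
      rw [sigma_root_apply hexp hKi hEr, hsys.K_dual j hj i hi, if_neg hne]
      simp
    obtain ⟨u, hu, v, hv, hEd, -⟩ := theta_spec hg E
    obtain ⟨hfu, hfv⟩ := fix_parts hg hle hab hexp hspan hsys hδ hi hu hv hEd hσE
    have h1 : ⁅X, E⁆ = 0 := by
      rw [hEd, lie_add, lie_smul, hcomm u hfu, hcomm v hfv, smul_zero, add_zero]
    have h2 := hEr X hX
    rw [h1] at h2
    rcases smul_eq_zero.mp h2.symm with h | h
    · exact h
    · exact absurd h hE0
  set a := X - α i X • K i with hadef
  have hac : a ∈ cspan gC t :=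
    Submodule.sub_mem _ hX (Submodule.smul_mem _ _ hKi)
  have hroots : ∀ b : Module.Dual ℂ gC, IsRoot gC t b → b a = 0 := by
    intro b hb
    rcases hsys.decomp b hb with ⟨kk, hk⟩ | ⟨kk, hk⟩
    · have hbX : b X = (kk i : ℂ) * α i X := by
        rw [hk _ hX, Finset.sum_eq_single i]
        · intro j hj hne; rw [hαj j hj hne, mul_zero]
        · intro h; exact absurd hi h
      have hbK : b (K i) = (kk i : ℂ) := by rw [hk _ hKi, sum_eval hsys hi]
      rw [hadef, map_sub, map_smul, smul_eq_mul, hbX, hbK]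
      ring
    · have hbX : b X = -((kk i : ℂ) * α i X) := by
        rw [hk _ hX]
        congr 1
        rw [Finset.sum_eq_single i]
        · intro j hj hne; rw [hαj j hj hne, mul_zero]
        · intro h; exact absurd hi h
      have hbK : b (K i) = -(kk i : ℂ) := by rw [hk _ hKi, sum_eval hsys hi]
      rw [hadef, map_sub, map_smul, smul_eq_mul, hbX, hbK]
      ring
  have h0 := eq_zero_of_ann hspan hab hac hroots
  rw [hadef] at h0
  have := sub_eq_zero.mp h0
  exact this

end Aux

/-- Lemma 3.2.  Let `g` be a compact simple Lie algebra, `t` a maximal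
abelian subalgebra, `δ = Σ m_j α_j` the highest root, `σ = Ad(exp (π/2) √-1 K i)` with
`m i = 3`, and `h := g^σ`.  Let `τ` be an involutive automorphism of `g` with `τ(h) = h`
and `τ(t) = t`, and write `τ(δ) = Σ c_j α_j` (where `τ(δ)(H) = δ(τ⁻¹ H)`).  Then
(i) `τ ∘ σ = σ ∘ τ` iff `c i = 3`, and (ii) `τ ∘ σ = σ⁻¹ ∘ τ` iff `c i = -3`. -/
theorem stmt_8
    (gC : Type) [LieRing gC] [LieAlgebra ℂ gC] [LieAlgebra ℝ gC]
    [IsScalarTower ℝ ℂ gC] [FiniteDimensional ℂ gC]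
    [LieAlgebra.IsSimple ℂ gC]
    (g t : LieSubalgebra ℝ gC)
    (hg : IsCompactForm gC g) (ht : IsMaxAbelian gC g t)
    (expAd : gC → (gC ≃ₗ⁅ℂ⁆ gC)) (hexp : IsExpAd gC expAd)
    (hspan : SpansByRoots gC t)
    (n : ℕ) (α : ℕ → Module.Dual ℂ gC) (K : ℕ → gC)
    (hsys : IsSimpleSystem gC t n α K)
    (δ : Module.Dual ℂ gC) (m : ℕ → ℕ) (hδ : IsHighestRoot gC t n α δ m)
    (i : ℕ) (hi : i ∈ Finset.Icc 1 n) (hmi : m i = 3)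
    (τ : gC ≃ₗ⁅ℂ⁆ gC) (hτ2 : τ * τ = 1)
    (hτg : (⇑τ) '' (g : Set gC) = (g : Set gC))
    (hτt : (⇑τ) '' (t : Set gC) = (t : Set gC))
    (hτh : (⇑τ) '' FixIn gC g (sigmaAd gC expAd (K i)) = FixIn gC g (sigmaAd gC expAd (K i)))
    (c : ℕ → ℤ)
    (hc : ∀ H ∈ cspan gC t, δ (τ⁻¹ H) = ∑ j ∈ Finset.Icc 1 n, (c j : ℂ) * α j H) :
    (τ * sigmaAd gC expAd (K i) = sigmaAd gC expAd (K i) * τ ↔ c i = 3) ∧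
    (τ * sigmaAd gC expAd (K i) = (sigmaAd gC expAd (K i))⁻¹ * τ ↔ c i = -3) := by

  have hle := ht.le
  have hab := ht.abelian
  have hKc := hsys.K_mem i hi
  set σ := sigmaAd gC expAd (K i) with hσdef
  -- τ is an involution as a function
  have hτfun : ∀ x : gC, τ (τ x) = x := by
    intro x
    have h := DFunLike.congr_fun hτ2 x
    rwa [mul_apply, one_apply'] at h
  have hτinv : ∀ x : gC, τ⁻¹ x = τ x := by
    intro x
    conv_lhs => rw [inv_apply, ← hτfun x]
    exact τ.symm_apply_apply (τ x)
  -- τ (K i) is in the centralizer of h inside t_C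
  have hτK : τ (K i) ∈ cspan gC t := map_cspan τ hτt hKc
  have hτKcomm : ∀ Y ∈ FixIn gC g σ, ⁅τ (K i), Y⁆ = 0 := by
    intro Y hY
    have hY' : Y ∈ (⇑τ) '' FixIn gC g σ := by rw [hτh]; exact hY
    obtain ⟨Y₀, hY₀, rfl⟩ := hY'
    rw [← emap_lie, fix_ad_zero hg hle hab hexp hspan hsys hδ hi hmi hY₀, emap_zero]
  have hτKi : τ (K i) = α i (τ (K i)) • K i :=
    cent_eq hg hle hab hexp hspan hsys hδ hi hτK hτKcomm
  set lam := α i (τ (K i)) with hlam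
  have hK0 : K i ≠ 0 := by
    intro h
    have hd := hsys.K_dual i hi i hi
    rw [if_pos rfl, h, map_zero] at hd
    norm_num at hd
  have hlam2 : lam ^ 2 = 1 := by
    have hKK : (lam ^ 2) • K i = K i := by
      calc (lam ^ 2) • K i = lam • (lam • K i) := by rw [smul_smul, sq]
        _ = lam • τ (K i) := by rw [← hτKi]
        _ = τ (lam • K i) := (emap_smul τ _ _).symm
        _ = τ (τ (K i)) := by rw [← hτKi]
        _ = K i := hτfun _
    have h2 : (lam ^ 2 - 1) • K i = 0 := by
      rw [sub_smul, one_smul, hKK, sub_self]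
    rcases smul_eq_zero.mp h2 with h | h
    · exact sub_eq_zero.mp h
    · exact absurd h hK0
  have hlam' : lam = 1 ∨ lam = -1 := by
    have h : (lam - 1) * (lam + 1) = 0 := by linear_combination hlam2
    rcases mul_eq_zero.mp h with h' | h'
    · exact Or.inl (by linear_combination h')
    · exact Or.inr (by linear_combination h')
  -- value of δ on K i
  have hδK : δ (K i) = 3 := by
    rw [hδ.decomp _ hKc, sum_eval hsys hi, hmi]
    norm_num
  have hci : (c i : ℂ) = 3 * lam := by
    have h := hc (K i) hKc
    rw [sum_eval hsys hi (fun j => (c j : ℂ)), hτinv, hτKi, map_smul, hδK, smul_eq_mul] at h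
    linear_combination -h
  -- expAd basics
  have hexp0 : expAd (0 : gC) = 1 := by
    have h := hexp.add 0 0 (by simp)
    rw [add_zero] at h
    have := mul_left_cancel (a := expAd (0:gC)) (b := (1 : gC ≃ₗ⁅ℂ⁆ gC)) (c := expAd (0:gC))
      (by rw [← h]; exact mul_one _)
    exact this.symm
  have hexpneg : expAd (-(cst • K i)) = σ⁻¹ := by
    have h := hexp.add (cst • K i) (-(cst • K i)) (by simp)
    rw [add_neg_cancel, hexp0] at h
    exact eq_inv_of_mul_eq_one_right h.symm
  have hconj := hexp.conj τ (cst • K i)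
  -- σ ∘ σ ≠ 1
  obtain ⟨-, Xδ, hXδ0, hXδr⟩ := hδ.isRoot
  have hσX : σ Xδ = Complex.exp (cst * 3) • Xδ := by
    rw [hσdef, sigma_root_apply hexp hKc hXδr, hδK]
  have hσ2X : σ (σ Xδ) = -Xδ := by
    rw [hσX, emap_smul, hσX, smul_smul, ← Complex.exp_add]
    have e1 : cst * 3 + cst * 3 = (Real.pi : ℂ) * I + 2 * (Real.pi : ℂ) * I := by
      rw [cst]; push_cast; ring
    have e2 : Complex.exp (cst * 3 + cst * 3) = -1 := by
      rw [e1, Complex.exp_add, Complex.exp_pi_mul_I, Complex.exp_two_pi_mul_I]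
      ring
    rw [e2, neg_smul, one_smul]
  have hσσne : σ * σ ≠ 1 := by
    intro h
    have h1 := DFunLike.congr_fun h Xδ
    rw [mul_apply, one_apply', hσ2X] at h1
    apply hXδ0
    have h2 : (2 : ℂ) • Xδ = 0 := by
      have e : (2:ℂ) • Xδ = Xδ + Xδ := by module
      rw [e]
      nth_rewrite 1 [← h1]
      abel
    rcases smul_eq_zero.mp h2 with h' | h'
    · norm_num at h'
    · exact h'
  have hσform : σ = expAd (cst • K i) := rfl
  rcases hlam' with h1 | h1
  · -- τ K i = K i
    have harg : τ (cst • K i) = cst • K i := by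
      rw [emap_smul, hτKi, h1, one_smul]
    have hτσ : τ * σ * τ⁻¹ = σ := by
      rw [hσform, hconj, harg]
    have hcomm : τ * σ = σ * τ := by
      calc τ * σ = (τ * σ * τ⁻¹) * τ := by group
        _ = σ * τ := by rw [hτσ]
    have hcival : c i = 3 := by
      have h3 : (c i : ℂ) = ((3 : ℤ) : ℂ) := by rw [hci, h1, mul_one]; norm_num
      exact_mod_cast h3
    constructor
    · exact ⟨fun _ => hcival, fun _ => hcomm⟩
    · constructor
      · intro hass
        exfalso
        apply hσσne
        have hst : σ * τ = σ⁻¹ * τ := by rw [← hcomm, hass]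
        have h2 : σ = σ⁻¹ := mul_right_cancel hst
        calc σ * σ = σ * σ⁻¹ := by rw [← h2]
          _ = 1 := mul_inv_cancel σ
      · intro hc3
        exfalso
        rw [hcival] at hc3
        omega
  · -- τ K i = -K i
    have harg : τ (cst • K i) = -(cst • K i) := by
      rw [emap_smul, hτKi, h1]
      module
    have hτσ : τ * σ * τ⁻¹ = σ⁻¹ := by
      rw [hσform, hconj, harg, ← hσform, hexpneg]
    have hanti : τ * σ = σ⁻¹ * τ := by
      calc τ * σ = (τ * σ * τ⁻¹) * τ := by group
        _ = σ⁻¹ * τ := by rw [hτσ]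
    have hcival : c i = -3 := by
      have h3 : (c i : ℂ) = ((-3 : ℤ) : ℂ) := by rw [hci, h1]; norm_num
      exact_mod_cast h3
    constructor
    · constructor
      · intro hcomm
        exfalso
        apply hσσne
        have hst : σ * τ = σ⁻¹ * τ := by rw [← hcomm, hanti]
        have h2 : σ = σ⁻¹ := mul_right_cancel hst
        calc σ * σ = σ * σ⁻¹ := by rw [← h2]
          _ = 1 := mul_inv_cancel σ
      · intro hc3
        exfalso
        rw [hcival] at hc3
        omega
    · exact ⟨fun _ => hcival, fun _ => hanti⟩


end Paper
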